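/- arXiv:1405.1945 — 6 statements merged into one kernel-verified Lean document; each statement's English description precedes it below -/
import Mathlib

section
/- With A_1,...,A_n the anticommuting self-adjoint matrices built from Pauli matrices as above, the linear map φ: ℓ_∞^n → M_{2^n}(ℂ) defined by φ(e_i) = (1/√n) A_i is bounded with norm at most √2. -/
open scoped Matrix BigOperators

noncomputable def opNorm {ι : Type*} [Fintype ι] [DecidableEq ι] (A : Matrix ι ι ℂ) : ℝ :=
  ‖Matrix.toEuclideanCLM (𝕜 := ℂ) A‖

def pauliX : Matrix (Fin 2) (Fin 2) ℂ := !![0, 1; 1, 0]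

def pauliZ : Matrix (Fin 2) (Fin 2) ℂ := !![1, 0; 0, -1]

noncomputable def pauliOp (n : ℕ) (k : Fin n) :
    Matrix (Fin n → Fin 2) (Fin n → Fin 2) ℂ :=
  Matrix.of fun f g => ∏ j : Fin n,
    (if j < k then pauliZ else if j = k then pauliX else 1) (f j) (g j)

lemma XZ : pauliX * pauliZ = -(pauliZ * pauliX) := by
  ext i j; fin_cases i <;> fin_cases j <;> norm_num [pauliX, pauliZ, Matrix.mul_apply, Fin.sum_univ_two]

lemma XX : pauliX * pauliX = 1 := by
  ext i j; fin_cases i <;> fin_cases j <;> norm_num [pauliX, Matrix.mul_apply, Fin.sum_univ_two, Matrix.one_apply]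

lemma ZZ : pauliZ * pauliZ = 1 := by
  ext i j; fin_cases i <;> fin_cases j <;> norm_num [pauliZ, Matrix.mul_apply, Fin.sum_univ_two, Matrix.one_apply]

lemma tensor_mul {n : ℕ} (M N : Fin n → Matrix (Fin 2) (Fin 2) ℂ) :
    ((Matrix.of fun f g => ∏ j, M j (f j) (g j)) *
      (Matrix.of fun f g => ∏ j, N j (f j) (g j)) : Matrix (Fin n → Fin 2) (Fin n → Fin 2) ℂ)
    = Matrix.of fun f g => ∏ j, (M j * N j) (f j) (g j) := by
  ext f g
  simp only [Matrix.mul_apply, Matrix.of_apply]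
  simp only [← Finset.prod_mul_distrib]
  rw [show (Finset.univ : Finset (Fin n → Fin 2)) = Fintype.piFinset fun _ => Finset.univ by
    simp]
  rw [← Finset.prod_univ_sum (fun _ => (Finset.univ : Finset (Fin 2))) (fun j y => M j (f j) y * N j y (g j))]


/-- component matrices -/
def pc {n : ℕ} (k : Fin n) (j : Fin n) : Matrix (Fin 2) (Fin 2) ℂ :=
  if j < k then pauliZ else if j = k then pauliX else 1

lemma pauliOp_eq {n : ℕ} (k : Fin n) :
    pauliOp n k = Matrix.of fun f g => ∏ j : Fin n, pc k j (f j) (g j) := rfl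

lemma tensor_one {n : ℕ} :
    (Matrix.of fun f g : Fin n → Fin 2 => ∏ j : Fin n, (1 : Matrix (Fin 2) (Fin 2) ℂ) (f j) (g j))
    = 1 := by
  ext f g
  simp only [Matrix.of_apply, Matrix.one_apply]
  by_cases h : f = g
  · subst h; simp
  · rw [if_neg h]
    obtain ⟨j, hj⟩ := Function.ne_iff.mp h
    exact Finset.prod_eq_zero (Finset.mem_univ j) (by simp [hj])

lemma pauli_sq {n : ℕ} (k : Fin n) : pauliOp n k * pauliOp n k = 1 := by
  rw [pauliOp_eq, tensor_mul, ← tensor_one]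
  congr 1; ext f g
  congr 1; ext j
  unfold pc
  split_ifs <;> simp [XX, ZZ]

lemma pauli_anticomm' {n : ℕ} (k l : Fin n) (h : k < l) :
    pauliOp n k * pauliOp n l = -(pauliOp n l * pauliOp n k) := by
  rw [pauliOp_eq, pauliOp_eq, tensor_mul, tensor_mul]
  ext f g
  have key : ∀ j, (pc k j * pc l j) (f j) (g j) =
      (if j = k then -1 else 1) * (pc l j * pc k j) (f j) (g j) := by
    intro j
    unfold pc
    rcases lt_trichotomy j k with hj | hj | hj
    · rw [if_pos hj, if_pos (hj.trans h), if_neg hj.ne]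
      simp
    · subst hj
      rw [if_neg (lt_irrefl _), if_pos h, if_pos rfl, if_pos rfl]
      simp [XZ]
    · simp only [if_neg (not_lt.mpr hj.le), if_neg hj.ne']
      by_cases hjl : j < l
      · simp [hjl]
      · simp only [if_neg hjl]
        by_cases hjl' : j = l <;> simp [hjl']
  simp only [Matrix.of_apply, Matrix.neg_apply]
  rw [Finset.prod_congr rfl (fun j _ => key j), Finset.prod_mul_distrib]
  simp [Finset.prod_ite_eq']

lemma pauli_anticomm {n : ℕ} (k l : Fin n) (h : k ≠ l) :
    pauliOp n k * pauliOp n l = -(pauliOp n l * pauliOp n k) := by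
  rcases h.lt_or_gt with h | h
  · exact pauli_anticomm' k l h
  · have := pauli_anticomm' l k h
    rw [this, neg_neg]

lemma pauli_sa {n : ℕ} (k : Fin n) : (pauliOp n k)ᴴ = pauliOp n k := by
  ext f g
  rw [Matrix.conjTranspose_apply, pauliOp_eq, Matrix.of_apply, Matrix.of_apply, star_prod]
  refine Finset.prod_congr rfl fun j _ => ?_
  have : ∀ a b, star (pc k j a b) = pc k j b a := by
    intro a b
    unfold pc
    split_ifs <;> fin_cases a <;> fin_cases b <;>
      simp [pauliX, pauliZ, Matrix.one_apply]
  exact this (g j) (f j)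

lemma key_identity (n : ℕ) (a : Fin n → ℂ) :
    (∑ i, a i • pauliOp n i)ᴴ * (∑ i, a i • pauliOp n i) +
      (∑ i, a i • pauliOp n i) * (∑ i, a i • pauliOp n i)ᴴ
    = (∑ i, (2 * (starRingEnd ℂ (a i) * a i))) • 1 := by
  have hsa : (∑ i, a i • pauliOp n i)ᴴ = ∑ i, starRingEnd ℂ (a i) • pauliOp n i := by
    simp [Matrix.conjTranspose_sum, Matrix.conjTranspose_smul, pauli_sa]
  rw [hsa]
  have e1 : (∑ i, starRingEnd ℂ (a i) • pauliOp n i) * (∑ i, a i • pauliOp n i)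
      = ∑ i, ∑ j, (starRingEnd ℂ (a i) * a j) • (pauliOp n i * pauliOp n j) := by
    rw [Finset.sum_mul]
    refine Finset.sum_congr rfl fun i _ => ?_
    rw [Finset.mul_sum]
    refine Finset.sum_congr rfl fun j _ => ?_
    rw [Matrix.smul_mul, Matrix.mul_smul, smul_smul]
  have e2 : (∑ i, a i • pauliOp n i) * (∑ i, starRingEnd ℂ (a i) • pauliOp n i)
      = ∑ i, ∑ j, (starRingEnd ℂ (a i) * a j) • (pauliOp n j * pauliOp n i) := by
    rw [Finset.sum_mul]
    rw [Finset.sum_comm]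
    refine Finset.sum_congr rfl fun i _ => ?_
    rw [Finset.mul_sum]
    refine Finset.sum_congr rfl fun j _ => ?_
    rw [Matrix.smul_mul, Matrix.mul_smul, smul_smul, mul_comm]
  rw [e1, e2, ← Finset.sum_add_distrib]
  have key : ∀ i : Fin n,
      (∑ j, (starRingEnd ℂ (a i) * a j) • (pauliOp n i * pauliOp n j)) +
        (∑ j, (starRingEnd ℂ (a i) * a j) • (pauliOp n j * pauliOp n i))
      = (2 * (starRingEnd ℂ (a i) * a i)) • 1 := by
    intro i
    rw [← Finset.sum_add_distrib]
    have : ∀ j : Fin n, (starRingEnd ℂ (a i) * a j) • (pauliOp n i * pauliOp n j) +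
        (starRingEnd ℂ (a i) * a j) • (pauliOp n j * pauliOp n i)
        = if j = i then (2 * (starRingEnd ℂ (a i) * a i)) • (1 : Matrix _ _ ℂ) else 0 := by
      intro j
      by_cases hij : j = i
      · subst hij
        rw [pauli_sq, if_pos rfl, ← add_smul, two_mul]
      · rw [if_neg hij, pauli_anticomm _ _ (Ne.symm hij), smul_neg, neg_add_cancel]
    rw [Finset.sum_congr rfl fun j _ => this j, Finset.sum_ite_eq']
    simp
  rw [Finset.sum_congr rfl fun i _ => key i, ← Finset.sum_smul]

set_option synthInstance.maxHeartbeats 1000000 in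
/-- The linear map `φ : ℓ_∞^n → M_{2^n}(ℂ)` defined by `φ(e_i) = (1/√n) A_i` (with `A_i` the
anticommuting self-adjoint matrices built from Pauli matrices) is bounded with norm at most
`√2`: whenever `sup_i |a i| ≤ 1`, the operator norm of `φ(a) = (1/√n) ∑ i, a i • A i`
is at most `√2`. -/
theorem stmt2 (n : ℕ) (a : Fin n → ℂ) (ha : ∀ i, ‖a i‖ ≤ 1) :
    opNorm (((Real.sqrt n)⁻¹ : ℂ) • ∑ i, a i • pauliOp n i) ≤ Real.sqrt 2 := by
  rcases Nat.eq_zero_or_pos n with hn | hn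
  · subst hn
    simp [opNorm, Real.sqrt_nonneg]
  set M := ∑ i, a i • pauliOp n i with hM
  set e := Matrix.toEuclideanCLM (𝕜 := ℂ) (n := Fin n → Fin 2) with he
  set B := e M with hB
  have hcnorm : ‖e ((∑ i, (2 * (starRingEnd ℂ (a i) * a i))) • 1)‖ ≤ 2 * n := by
    rw [map_smul, map_one]
    rw [norm_smul (α := ℂ)
      (β := EuclideanSpace ℂ (Fin n → Fin 2) →L[ℂ] EuclideanSpace ℂ (Fin n → Fin 2)) _ 1,
      norm_one, mul_one]
    calc ‖∑ i, (2 * (starRingEnd ℂ (a i) * a i))‖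
        ≤ ∑ i : Fin n, ‖(2 : ℂ) * (starRingEnd ℂ (a i) * a i)‖ := norm_sum_le _ _
      _ ≤ ∑ i : Fin n, 2 := by
          refine Finset.sum_le_sum fun i _ => ?_
          have h0 := norm_nonneg (a i)
          have h1 := ha i
          rw [norm_mul, norm_mul, RingHomIsometric.norm_map]
          have h2 : ‖(2:ℂ)‖ = 2 := by norm_num
          rw [h2]
          nlinarith
      _ = 2 * n := by simp [mul_comm]
  have hBsq : ‖B‖ * ‖B‖ ≤ 2 * n := by
    rw [← CStarRing.norm_star_mul_self]
    have hle : star B * B ≤ star B * B + B * star B :=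
      le_add_of_nonneg_right (mul_star_self_nonneg B)
    have h2 : ‖star B * B‖ ≤ ‖star B * B + B * star B‖ :=
      CStarAlgebra.norm_le_norm_of_nonneg_of_le (star_mul_self_nonneg B) hle
    have h3 : star B * B + B * star B = e ((∑ i, (2 * (starRingEnd ℂ (a i) * a i))) • 1) := by
      rw [hB, ← map_star, ← map_mul, ← map_mul, ← map_add]
      congr 1
      rw [Matrix.star_eq_conjTranspose, key_identity]
    rw [h3] at h2
    exact h2.trans hcnorm
  have hBle : ‖B‖ ≤ Real.sqrt (2 * n) := by
    rw [show (2 * (n:ℝ)) = Real.sqrt (2*n) * Real.sqrt (2*n) by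
      rw [Real.mul_self_sqrt (by positivity)]] at hBsq
    exact (mul_self_le_mul_self_iff (norm_nonneg _) (Real.sqrt_nonneg _)).mpr hBsq
  have : opNorm (((Real.sqrt n)⁻¹ : ℂ) • M) = (Real.sqrt n)⁻¹ * ‖B‖ := by
    rw [opNorm, map_smul]
    rw [norm_smul (α := ℂ)
      (β := EuclideanSpace ℂ (Fin n → Fin 2) →L[ℂ] EuclideanSpace ℂ (Fin n → Fin 2))]
    congr 1
    simp [Real.sqrt_nonneg]
  rw [this]
  have hsn : (0:ℝ) < Real.sqrt n := Real.sqrt_pos.mpr (by exact_mod_cast hn)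
  calc (Real.sqrt n)⁻¹ * ‖B‖ ≤ (Real.sqrt n)⁻¹ * Real.sqrt (2 * n) := by gcongr
    _ = Real.sqrt 2 := by
        rw [Real.sqrt_mul (by norm_num)]
        field_simp
end

section
/- There exists a unit vector z ∈ ℂ^{2^n} ⊗ ℂ^{2^n} such that (A_i ⊗ A_i) z = z for all i = 1,...,n, where A_i are the anticommuting self-adjoint matrices built from Pauli matrices as A_k = σ_z^{⊗(k−1)} ⊗ σ_x ⊗ I^{⊗(n−k)}. -/
open scoped Matrix Kronecker BigOperators

lemma pauli_factor_sum (M : Matrix (Fin 2) (Fin 2) ℂ)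
    (hM : M = pauliZ ∨ M = pauliX ∨ M = 1) (a b : Fin 2) :
    ∑ x : Fin 2, M a x * M b x = if a = b then 1 else 0 := by
  rcases hM with h | h | h <;> subst h <;> fin_cases a <;> fin_cases b <;>
    simp [pauliZ, pauliX, Fin.sum_univ_two, Matrix.one_apply]

lemma pauliOp_sum (n : ℕ) (k : Fin n) (f g : Fin n → Fin 2) :
    ∑ h : Fin n → Fin 2, pauliOp n k f h * pauliOp n k g h
      = if f = g then 1 else 0 := by
  have key : ∀ j : Fin n, ∑ x : Fin 2,
      (if j < k then pauliZ else if j = k then pauliX else 1) (f j) x *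
      (if j < k then pauliZ else if j = k then pauliX else 1) (g j) x
      = if f j = g j then 1 else 0 := by
    intro j
    apply pauli_factor_sum
    split_ifs <;> tauto
  calc ∑ h : Fin n → Fin 2, pauliOp n k f h * pauliOp n k g h
      = ∑ h : Fin n → Fin 2, ∏ j : Fin n,
          ((if j < k then pauliZ else if j = k then pauliX else 1) (f j) (h j) *
           (if j < k then pauliZ else if j = k then pauliX else 1) (g j) (h j)) := by
        simp [pauliOp, Finset.prod_mul_distrib]
    _ = ∏ j : Fin n, ∑ x : Fin 2,
          ((if j < k then pauliZ else if j = k then pauliX else 1) (f j) x *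
           (if j < k then pauliZ else if j = k then pauliX else 1) (g j) x) := by
        rw [Finset.prod_univ_sum]
        rfl
    _ = ∏ j : Fin n, if f j = g j then (1:ℂ) else 0 := by
        exact Finset.prod_congr rfl fun j _ => key j
    _ = if f = g then 1 else 0 := by
        by_cases hfg : f = g
        · simp [hfg]
        · obtain ⟨j, hj⟩ := Function.ne_iff.mp hfg
          rw [if_neg hfg]
          exact Finset.prod_eq_zero (Finset.mem_univ j) (by simp [hj])

/-- There exists a unit vector `z ∈ ℂ^{2^n} ⊗ ℂ^{2^n}` with `(A_i ⊗ A_i) z = z` for every `i`,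
where `A_i = pauliOp n i` are the anticommuting self-adjoint matrices built from the Pauli
matrices. The vector is realized in `ℂ^{2^n × 2^n}` and `A_i ⊗ A_i` acts by `mulVec` via the
Kronecker product; the norm is the Euclidean one. -/
theorem stmt4 (n : ℕ) :
    ∃ z : ((Fin n → Fin 2) × (Fin n → Fin 2)) → ℂ,
      Real.sqrt (∑ p, ‖z p‖ ^ 2) = 1 ∧
      ∀ i : Fin n, (pauliOp n i ⊗ₖ pauliOp n i).mulVec z = z := by
  set c : ℝ := (Real.sqrt (2 ^ n))⁻¹ with hc
  have hs : Real.sqrt (2 ^ n) > 0 := Real.sqrt_pos.mpr (by positivity)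
  refine ⟨fun p => if p.1 = p.2 then (c : ℂ) else 0, ?_, ?_⟩
  · have : (∑ p : (Fin n → Fin 2) × (Fin n → Fin 2),
        ‖if p.1 = p.2 then (c : ℂ) else 0‖ ^ 2) = 1 := by
      rw [Fintype.sum_prod_type]
      have : ∀ f : Fin n → Fin 2, (∑ g : Fin n → Fin 2,
          ‖if f = g then (c : ℂ) else 0‖ ^ 2) = c ^ 2 := by
        intro f
        rw [Finset.sum_eq_single f]
        · simp only [if_pos rfl]
          simp [Complex.norm_real, abs_of_pos (inv_pos.mpr hs)]
        · intro g _ hg; simp [Ne.symm hg]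
        · simp
      simp only [this, Finset.sum_const, Finset.card_univ, nsmul_eq_mul]
      rw [hc]
      rw [Fintype.card_fun, Fintype.card_fin, Fintype.card_fin]
      rw [inv_pow, Real.sq_sqrt (by positivity)]
      push_cast
      field_simp
    rw [this, Real.sqrt_one]
  · intro i
    funext p
    obtain ⟨f, g⟩ := p
    simp only [Matrix.mulVec, dotProduct, Fintype.sum_prod_type,
      Matrix.kroneckerMap_apply]
    rw [show (∑ f' : Fin n → Fin 2, ∑ g' : Fin n → Fin 2,
        pauliOp n i f f' * pauliOp n i g g' * (if f' = g' then (c:ℂ) else 0))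
        = ∑ f' : Fin n → Fin 2, pauliOp n i f f' * pauliOp n i g f' * c from by
      refine Finset.sum_congr rfl fun f' _ => ?_
      rw [Finset.sum_eq_single f'] <;> simp +contextual [Ne.symm]]
    rw [← Finset.sum_mul, pauliOp_sum]
    by_cases hfg : f = g <;> simp [hfg]
end

section
/- Let ρ be a density matrix on ℂ^{n²} ≅ ℂ^n ⊗ ℂ^n of the Chruściński–Kossakowski isotropic-like form ρ = Σ_{i,j=1}^n a_{ij} |ii⟩⟨jj| + Σ_{i≠j} c_{ij} |ij⟩⟨ij| with (a_{ij}) positive semidefinite, c_{ij} ≥ 0, c_{ij} c_{ji} ≥ |a_{ij}|², and Σ_i a_{ii} + Σ_{i≠j} c_{ij} = 1. Then the projective tensor norm of ρ in S_1^n ⊗_π S_1^n is at most 2. -/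
open scoped Matrix Kronecker BigOperators

open ComplexOrder

/-- The trace norm `‖A‖₁ = Tr √(AᴴA)` on `M_n(ℂ)` (the norm of the Schatten class `S_1^n`). -/
noncomputable def traceNorm {n : ℕ} (A : Matrix (Fin n) (Fin n) ℂ) : ℝ :=
  (((Matrix.posSemidef_conjTranspose_mul_self A).1.eigenvectorUnitary.1 *
      Matrix.diagonal (((↑) : ℝ → ℂ) ∘ (√·) ∘ (Matrix.posSemidef_conjTranspose_mul_self A).1.eigenvalues) *
      (star (Matrix.posSemidef_conjTranspose_mul_self A).1.eigenvectorUnitary : Matrix (Fin n) (Fin n) ℂ)).trace).re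

/-- The projective tensor norm on `S_1^n ⊗_π S_1^n`, for an element realized as a matrix on
`ℂ^n ⊗ ℂ^n`: the infimum of `∑ r, ‖x r‖₁ ‖y r‖₁` over all finite decompositions
`ρ = ∑ r, x r ⊗ y r`. -/
noncomputable def projNorm {n : ℕ} (ρ : Matrix (Fin n × Fin n) (Fin n × Fin n) ℂ) : ℝ :=
  sInf {t : ℝ | ∃ (N : ℕ) (x y : Fin N → Matrix (Fin n) (Fin n) ℂ),
    ρ = ∑ r, x r ⊗ₖ y r ∧ t = ∑ r, traceNorm (x r) * traceNorm (y r)}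

open Matrix in
lemma psd_diag_nonneg {n : ℕ} {M : Matrix (Fin n) (Fin n) ℂ} (h : M.PosSemidef) (i : Fin n) :
    0 ≤ M i i := by
  exact h.diag_nonneg

open Matrix in
lemma conjT_std {n : ℕ} (i j : Fin n) (α : ℂ) :
    (Matrix.single i j α)ᴴ = Matrix.single j i (star α) := by
  ext p q
  simp only [conjTranspose_apply, Matrix.single, of_apply, apply_ite, star_zero]
  by_cases h1 : i = q <;> by_cases h2 : j = p <;> simp [h1, h2]

open Matrix in
open scoped MatrixOrder in
lemma sqrt_unique {n : ℕ} {A B : Matrix (Fin n) (Fin n) ℂ} (hA : A.PosSemidef)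
    (hB : B.PosSemidef) (h : B ^ 2 = A) : CFC.sqrt A = B :=
  (CFC.sqrt_eq_iff A B hA.nonneg hB.nonneg).mpr (by rw [← h, sq])

open scoped MatrixOrder in
lemma traceNorm_eq {n : ℕ} (A : Matrix (Fin n) (Fin n) ℂ) :
    traceNorm A = (CFC.sqrt (Aᴴ * A)).trace.re := by
  have h := Matrix.posSemidef_conjTranspose_mul_self A
  rw [CFC.sqrt_eq_cfc, cfc_nnreal_eq_real _ _ h.nonneg, h.1.cfc_eq]
  have hf : (fun x : ℝ => ((NNReal.sqrt x.toNNReal : ℝ))) = Real.sqrt := by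
    funext x; rw [Real.sqrt]
  rw [hf]
  unfold traceNorm Matrix.IsHermitian.cfc
  rw [Unitary.conjStarAlgAut_apply]
  rfl

open Matrix in
lemma std_diag_eq {n : ℕ} (j : Fin n) (r : ℂ) :
    Matrix.single j j r = diagonal (Pi.single j r) := by
  ext p q
  simp only [Matrix.single, of_apply, diagonal_apply, Pi.single_apply]
  by_cases h1 : j = p <;> by_cases h2 : j = q <;> simp [h1, h2] <;> aesop

open Matrix in
lemma traceNorm_std {n : ℕ} (i j : Fin n) (α : ℂ) :
    traceNorm (Matrix.single i j α) = ‖α‖ := by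
  have hmul : (Matrix.single i j α)ᴴ * Matrix.single i j α
      = Matrix.single j j ((‖α‖ : ℂ)^2) := by
    rw [conjT_std, single_mul_single_same]
    have : (starRingEnd ℂ) α * α = Complex.normSq α := Complex.normSq_eq_conj_mul_self.symm
    rw [Complex.star_def, this, Complex.normSq_eq_norm_sq]
    push_cast
    rfl
  have hpsd : (Matrix.single j j ((‖α‖:ℂ))).PosSemidef := by
    rw [std_diag_eq]
    refine Matrix.PosSemidef.diagonal ?_
    intro k
    by_cases h : j = k <;> simp [Pi.single_apply, h]
  have hsq : (Matrix.single j j ((‖α‖:ℂ))) ^ 2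
      = (Matrix.single i j α)ᴴ * Matrix.single i j α := by
    rw [hmul, pow_two, single_mul_single_same, ← pow_two]
  rw [traceNorm_eq, sqrt_unique (Matrix.posSemidef_conjTranspose_mul_self _) hpsd hsq, std_diag_eq, trace_diagonal]
  simp [Pi.single_apply, Finset.sum_ite_eq]

open scoped MatrixOrder in
lemma traceNorm_nonneg {n : ℕ} (A : Matrix (Fin n) (Fin n) ℂ) : 0 ≤ traceNorm A := by
  have h : (CFC.sqrt (Aᴴ * A)).PosSemidef :=
    (Matrix.nonneg_iff_posSemidef (A := CFC.sqrt (Aᴴ * A))).mp (CFC.sqrt_nonneg _)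
  have : (0:ℂ) ≤ (CFC.sqrt (Aᴴ * A)).trace :=
    Finset.sum_nonneg fun i _ => psd_diag_nonneg h i
  rw [traceNorm_eq]
  exact (Complex.le_def.mp this).1

lemma norm_of_nonneg' {z : ℂ} (h : 0 ≤ z) : ‖z‖ = z.re := by
  obtain ⟨h1, h2⟩ := Complex.le_def.mp h
  have hz : z = (z.re : ℂ) := Complex.ext rfl (by simpa using h2.symm)
  conv_lhs => rw [hz]
  rw [Complex.norm_real, Real.norm_eq_abs, abs_of_nonneg (by simpa using h1)]

open Matrix in
lemma sumA {n : ℕ} (a : Matrix (Fin n) (Fin n) ℂ) (p1 p2 q1 q2 : Fin n) :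
    (∑ ij : Fin n × Fin n,
      (Matrix.single ij.1 ij.2 (a ij.1 ij.2) ⊗ₖ Matrix.single ij.1 ij.2 (1:ℂ)))
      (p1, p2) (q1, q2) = if p1 = p2 ∧ q1 = q2 then a p1 q1 else 0 := by
  rw [Matrix.sum_apply]
  rw [Finset.sum_eq_single_of_mem (p1, q1) (Finset.mem_univ _)]
  · rw [kroneckerMap_apply, single_apply_same]
    simp only [Matrix.single, of_apply, mul_ite, mul_one, mul_zero]
  · intro b _ hb
    rw [kroneckerMap_apply, single_apply_of_ne, zero_mul]
    intro hh
    exact hb (by simp [Prod.ext_iff, hh.1, hh.2])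

open Matrix in
lemma sumB {n : ℕ} (d : Fin n → Fin n → ℂ) (p1 p2 q1 q2 : Fin n) (hdd : ∀ i, d i i = 0) :
    (∑ ij : Fin n × Fin n,
      (Matrix.single ij.1 ij.1 (d ij.1 ij.2) ⊗ₖ Matrix.single ij.2 ij.2 (1:ℂ)))
      (p1, p2) (q1, q2)
    = if (p1, p2) = (q1, q2) ∧ p1 ≠ p2 then d p1 p2 else 0 := by
  rw [Matrix.sum_apply]
  rw [Finset.sum_eq_single_of_mem (p1, p2) (Finset.mem_univ _)]
  · rw [kroneckerMap_apply]
    simp only [Matrix.single, of_apply, true_and, mul_ite, ite_mul, mul_one, mul_zero, zero_mul,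
      Prod.mk.injEq, ne_eq]
    by_cases h1 : p1 = q1 <;> by_cases h2 : p2 = q2 <;> by_cases h3 : p1 = p2 <;>
      simp_all [hdd]
  · intro b _ hb
    by_cases hb1 : b.1 = p1
    · have hb2 : ¬ b.2 = p2 := fun hh => hb (by simp [Prod.ext_iff, hb1, hh])
      simp [Matrix.single, hb2]
    · simp [Matrix.single, hb1]

open Matrix in
/-- A density matrix of the Chruściński–Kossakowski isotropic-like form
`ρ = ∑_{i,j} a_{ij} |ii⟩⟨jj| + ∑_{i≠j} c_{ij} |ij⟩⟨ij|` with `(a_{ij})` positive semidefinite,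
`c_{ij} ≥ 0`, `c_{ij} c_{ji} ≥ |a_{ij}|²` and `∑_i a_{ii} + ∑_{i≠j} c_{ij} = 1`
has projective tensor norm at most `2` in `S_1^n ⊗_π S_1^n`. -/
theorem stmt8 (n : ℕ) (a : Matrix (Fin n) (Fin n) ℂ) (c : Fin n → Fin n → ℝ)
    (ha : a.PosSemidef)
    (hc : ∀ i j, i ≠ j → 0 ≤ c i j)
    (hac : ∀ i j, i ≠ j → ‖a i j‖ ^ 2 ≤ c i j * c j i)
    (hnorm : (∑ i, (a i i).re) + (∑ p : Fin n × Fin n,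
      if p.1 ≠ p.2 then c p.1 p.2 else 0) = 1)
    (ρ : Matrix (Fin n × Fin n) (Fin n × Fin n) ℂ)
    (hρ : ρ = Matrix.of fun p q =>
      (if p.1 = p.2 ∧ q.1 = q.2 then a p.1 q.1 else 0) +
      (if p = q ∧ p.1 ≠ p.2 then (c p.1 p.2 : ℂ) else 0)) :
    projNorm ρ ≤ 2 := by
  classical
  set d : Fin n → Fin n → ℂ := fun i j => if i = j then 0 else (c i j : ℂ) with hd
  have hdd : ∀ i, d i i = 0 := fun i => by simp [hd]
  let e : Fin (n*n + n*n) ≃ (Fin n × Fin n) ⊕ (Fin n × Fin n) :=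
    finSumFinEquiv.symm.trans (Equiv.sumCongr finProdFinEquiv.symm finProdFinEquiv.symm)
  let X : (Fin n × Fin n) ⊕ (Fin n × Fin n) → Matrix (Fin n) (Fin n) ℂ :=
    Sum.elim (fun p => Matrix.single p.1 p.2 (a p.1 p.2))
             (fun p => Matrix.single p.1 p.1 (d p.1 p.2))
  let Y : (Fin n × Fin n) ⊕ (Fin n × Fin n) → Matrix (Fin n) (Fin n) ℂ :=
    Sum.elim (fun p => Matrix.single p.1 p.2 1)
             (fun p => Matrix.single p.2 p.2 1)
  let x : Fin (n*n + n*n) → Matrix (Fin n) (Fin n) ℂ := fun r => X (e r)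
  let y : Fin (n*n + n*n) → Matrix (Fin n) (Fin n) ℂ := fun r => Y (e r)
  -- the decomposition
  have hdec : ρ = ∑ r, x r ⊗ₖ y r := by
    have hsum : ∑ r, x r ⊗ₖ y r = ∑ s, X s ⊗ₖ Y s := Equiv.sum_comp e (fun s => X s ⊗ₖ Y s)
    rw [hsum, Fintype.sum_sum_type]
    ext p q
    obtain ⟨p1, p2⟩ := p
    obtain ⟨q1, q2⟩ := q
    rw [hρ]
    simp only [Matrix.add_apply, of_apply, X, Y, Sum.elim_inl, Sum.elim_inr]
    rw [sumA a p1 p2 q1 q2, sumB d p1 p2 q1 q2 hdd]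
    congr 1
    split_ifs with h
    · simp [hd, h.2]
    · rfl
  -- cost of the decomposition
  set S : ℝ := ∑ p : Fin n × Fin n, if p.1 ≠ p.2 then c p.1 p.2 else 0 with hS
  have hcost : (∑ r, traceNorm (x r) * traceNorm (y r))
      = (∑ p : Fin n × Fin n, ‖a p.1 p.2‖) + S := by
    have hsum : ∑ r, traceNorm (x r) * traceNorm (y r)
        = ∑ s, traceNorm (X s) * traceNorm (Y s) :=
      Equiv.sum_comp e (fun s => traceNorm (X s) * traceNorm (Y s))
    rw [hsum, Fintype.sum_sum_type]
    congr 1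
    · refine Finset.sum_congr rfl fun p _ => ?_
      simp [X, Y, traceNorm_std]
    · refine Finset.sum_congr rfl fun p _ => ?_
      simp only [X, Y, Sum.elim_inr, traceNorm_std, hd]
      by_cases h : p.1 = p.2
      · simp [h]
      · simp only [h, if_false, ne_eq, not_false_eq_true, if_true, norm_one, mul_one]
        rw [Complex.norm_real, Real.norm_eq_abs, abs_of_nonneg (hc p.1 p.2 h)]
  -- bounds
  have hreaii : ∀ i, 0 ≤ (a i i).re := fun i => (Complex.le_def.mp (psd_diag_nonneg ha i)).1
  have hSle : S ≤ 1 := by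
    have : 0 ≤ ∑ i, (a i i).re := Finset.sum_nonneg fun i _ => hreaii i
    linarith
  have haAbs : (∑ p : Fin n × Fin n, ‖a p.1 p.2‖) ≤ (∑ i, (a i i).re) + S := by
    have hsplit : (∑ p : Fin n × Fin n, ‖a p.1 p.2‖)
        = (∑ p : Fin n × Fin n, if p.1 = p.2 then ‖a p.1 p.2‖ else 0)
        + (∑ p : Fin n × Fin n, if p.1 ≠ p.2 then ‖a p.1 p.2‖ else 0) := by
      rw [← Finset.sum_add_distrib]
      refine Finset.sum_congr rfl fun p _ => ?_
      by_cases h : p.1 = p.2 <;> simp [h]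
    have hdiag : (∑ p : Fin n × Fin n, if p.1 = p.2 then ‖a p.1 p.2‖ else 0)
        = ∑ i, (a i i).re := by
      rw [Fintype.sum_prod_type]
      refine Finset.sum_congr rfl fun i _ => ?_
      rw [Finset.sum_ite_eq Finset.univ i (fun j => ‖a i j‖)]
      simp [norm_of_nonneg' (psd_diag_nonneg ha i)]
    have hoff : (∑ p : Fin n × Fin n, if p.1 ≠ p.2 then ‖a p.1 p.2‖ else 0) ≤ S := by
      have step1 : (∑ p : Fin n × Fin n, if p.1 ≠ p.2 then ‖a p.1 p.2‖ else 0)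
          ≤ ∑ p : Fin n × Fin n, if p.1 ≠ p.2 then (c p.1 p.2 + c p.2 p.1)/2 else 0 := by
        refine Finset.sum_le_sum fun p _ => ?_
        by_cases h : p.1 = p.2
        · simp [h]
        · simp only [h, ne_eq, not_false_eq_true, if_true]
          have h1 := hac p.1 p.2 h
          have h2 := hc p.1 p.2 h
          have h3 := hc p.2 p.1 (Ne.symm h)
          nlinarith [norm_nonneg (a p.1 p.2), sq_nonneg (c p.1 p.2 - c p.2 p.1),
            sq_nonneg (‖a p.1 p.2‖ + (c p.1 p.2 + c p.2 p.1)/2)]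
      have step2 : (∑ p : Fin n × Fin n, if p.1 ≠ p.2 then c p.2 p.1 else 0) = S := by
        rw [hS]
        refine Fintype.sum_equiv (Equiv.prodComm _ _) _ _ fun p => ?_
        simp [Equiv.prodComm, ne_comm]
      have step3 : (∑ p : Fin n × Fin n, if p.1 ≠ p.2 then (c p.1 p.2 + c p.2 p.1)/2 else 0)
          = ((∑ p : Fin n × Fin n, if p.1 ≠ p.2 then c p.1 p.2 else 0)
            + (∑ p : Fin n × Fin n, if p.1 ≠ p.2 then c p.2 p.1 else 0))/2 := by
        rw [← Finset.sum_add_distrib, Finset.sum_div]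
        refine Finset.sum_congr rfl fun p _ => ?_
        by_cases h : p.1 = p.2 <;> simp [h] <;> ring
      rw [step3, step2, ← hS] at step1
      linarith
    linarith [hsplit, hdiag, hoff]
  -- conclude
  have hmem : ((∑ p : Fin n × Fin n, ‖a p.1 p.2‖) + S)
      ∈ {t : ℝ | ∃ (N : ℕ) (x y : Fin N → Matrix (Fin n) (Fin n) ℂ),
        ρ = ∑ r, x r ⊗ₖ y r ∧ t = ∑ r, traceNorm (x r) * traceNorm (y r)} :=
    ⟨n*n + n*n, x, y, hdec, hcost.symm⟩
  have hbdd : BddBelow {t : ℝ | ∃ (N : ℕ) (x y : Fin N → Matrix (Fin n) (Fin n) ℂ),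
      ρ = ∑ r, x r ⊗ₖ y r ∧ t = ∑ r, traceNorm (x r) * traceNorm (y r)} := by
    refine ⟨0, fun s hs => ?_⟩
    obtain ⟨N, x, y, -, rfl⟩ := hs
    exact Finset.sum_nonneg fun r _ => mul_nonneg (traceNorm_nonneg _) (traceNorm_nonneg _)
  calc projNorm ρ ≤ (∑ p : Fin n × Fin n, ‖a p.1 p.2‖) + S := csInf_le hbdd hmem
    _ ≤ 2 := by linarith
end

section
/- Let |ψ_α⟩ = Σ_{i=1}^n α_i |ii⟩ with α_i > 0 and Σ_i α_i² = 1, let 0 ≤ λ ≤ 1, and define ρ_λ = (1−λ) I/n² + λ |ψ_α⟩⟨ψ_α| on ℂ^n ⊗ ℂ^n. Then the partial transpose of ρ_λ has eigenvalues (1−λ)/n² ± λ α_i α_j for i ≠ j and (1−λ)/n² + λ α_i² for i = 1,...,n. Consequently ρ_λ has positive partial transpose if and only if λ ≤ min_{i≠j} 1/(1 + n² α_i α_j). -/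
open scoped Matrix BigOperators
open ComplexOrder

/-- The partial transpose (on the second tensor factor) of a matrix on `ℂ^n ⊗ ℂ^n`. -/
def partialTranspose {n : ℕ} (ρ : Matrix (Fin n × Fin n) (Fin n × Fin n) ℂ) :
    Matrix (Fin n × Fin n) (Fin n × Fin n) ℂ :=
  Matrix.of fun p q => ρ (p.1, q.2) (q.1, p.2)

lemma spec_mem {m : Type*} [Fintype m] [DecidableEq m] (M : Matrix m m ℂ) (μ : ℂ)
    (v : m → ℂ) (hv : v ≠ 0) (h : M *ᵥ v = μ • v) : μ ∈ spectrum ℂ M := by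
  rw [spectrum.mem_iff]
  intro hu
  rw [Matrix.isUnit_iff_isUnit_det] at hu
  have hdet : (algebraMap ℂ (Matrix m m ℂ) μ - M).det = 0 := by
    rw [← Matrix.exists_mulVec_eq_zero_iff]
    refine ⟨v, hv, ?_⟩
    rw [Matrix.sub_mulVec, h, Algebra.algebraMap_eq_smul_one, Matrix.smul_mulVec,
      Matrix.one_mulVec, sub_self]
  simp [hdet] at hu

lemma eigen_offdiag (n : ℕ) (a : Fin n → ℂ) (c l : ℂ)
    (M : Matrix (Fin n × Fin n) (Fin n × Fin n) ℂ)
    (hM : ∀ (x : Fin n × Fin n → ℂ) (p), (M *ᵥ x) p = c * x p + l * (a p.1 * a p.2) * x (p.2, p.1))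
    (i j : Fin n) (hij : i ≠ j) (s : ℂ) (hs : s * s = 1) :
    M *ᵥ (fun q => (if q = (i,j) then 1 else 0) + s * (if q = (j,i) then 1 else 0) : Fin n × Fin n → ℂ)
      = (c + s * l * (a i * a j)) • (fun q => (if q = (i,j) then 1 else 0) + s * (if q = (j,i) then 1 else 0) : Fin n × Fin n → ℂ) := by
  have hne1 : ((i,j) : Fin n × Fin n) ≠ (j,i) := by
    simp only [ne_eq, Prod.mk.injEq, not_and]
    intro h; exact absurd h hij
  funext p
  rw [hM]
  simp only [Pi.smul_apply, smul_eq_mul]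
  by_cases h1 : p = (i, j)
  · subst h1
    simp only [if_pos rfl, eq_self_iff_true, if_true, if_neg hne1, if_neg hne1.symm, eq_self_iff_true, if_true]
    ring
  · by_cases h2 : p = (j, i)
    · subst h2
      simp only [if_pos rfl, eq_self_iff_true, if_true, if_neg hne1, if_neg hne1.symm, eq_self_iff_true, if_true]
      have hc : a j * a i = a i * a j := mul_comm _ _
      rw [hc]
      linear_combination (-(l * (a i * a j))) * hs
    · have h3 : ((p.2, p.1) : Fin n × Fin n) ≠ (i, j) := by
        intro h; apply h2; rw [Prod.ext_iff] at h ⊢; exact ⟨h.2, h.1⟩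
      have h4 : ((p.2, p.1) : Fin n × Fin n) ≠ (j, i) := by
        intro h; apply h1; rw [Prod.ext_iff] at h ⊢; exact ⟨h.2, h.1⟩
      rw [if_neg h1, if_neg h2, if_neg h3, if_neg h4]
      ring

lemma eigen_diag (n : ℕ) (a : Fin n → ℂ) (c l : ℂ)
    (M : Matrix (Fin n × Fin n) (Fin n × Fin n) ℂ)
    (hM : ∀ (x : Fin n × Fin n → ℂ) (p), (M *ᵥ x) p = c * x p + l * (a p.1 * a p.2) * x (p.2, p.1))
    (i : Fin n) :
    M *ᵥ (fun q => if q = (i,i) then 1 else 0 : Fin n × Fin n → ℂ)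
      = (c + l * (a i * a i)) • (fun q => if q = (i,i) then 1 else 0 : Fin n × Fin n → ℂ) := by
  funext p
  rw [hM]
  simp only [Pi.smul_apply, smul_eq_mul]
  by_cases h1 : p = (i, i)
  · subst h1
    simp only [if_pos rfl, eq_self_iff_true, if_true]
    ring
  · have h3 : ((p.2, p.1) : Fin n × Fin n) ≠ (i, i) := by
      intro h; apply h1; rw [Prod.ext_iff] at h ⊢; exact ⟨h.2, h.1⟩
    simp only [if_neg h1, if_neg h3]
    ring

lemma quad_nonneg (n : ℕ) (α : Fin n → ℝ) (hα : ∀ i, 0 < α i) (c lam : ℝ)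
    (hc : 0 ≤ c) (hlam : 0 ≤ lam)
    (hb : ∀ i j : Fin n, i ≠ j → lam * (α i * α j) ≤ c) (x : Fin n × Fin n → ℂ) :
    0 ≤ ∑ p : Fin n × Fin n,
      (starRingEnd ℂ) (x p) * ((c:ℂ) * x p + ((lam * (α p.1 * α p.2) : ℝ) : ℂ) * x (p.2, p.1)) := by
  classical
  set w : Fin n × Fin n → ℝ := fun p => lam * (α p.1 * α p.2) with hw
  set N : Fin n × Fin n → ℝ := fun p => Complex.normSq (x p) with hN
  set T : Fin n × Fin n → ℝ := fun p => ((starRingEnd ℂ) (x p) * x (p.2, p.1)).re with hT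
  set U : Fin n × Fin n → ℝ := fun p => ((starRingEnd ℂ) (x p) * x (p.2, p.1)).im with hU
  have hwpos : ∀ p, 0 ≤ w p := fun p => mul_nonneg hlam (mul_nonneg (hα _).le (hα _).le)
  have hwsw : ∀ p : Fin n × Fin n, w (p.2, p.1) = w p := by
    intro p; simp only [hw]; ring
  have hNnn : ∀ p, 0 ≤ N p := fun p => Complex.normSq_nonneg _
  -- rewrite each summand
  have hterm : ∀ p : Fin n × Fin n,
      (starRingEnd ℂ) (x p) * ((c:ℂ) * x p + ((w p : ℝ) : ℂ) * x (p.2, p.1))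
        = ((c * N p : ℝ) : ℂ) + ((w p : ℝ) : ℂ) * ((starRingEnd ℂ) (x p) * x (p.2, p.1)) := by
    intro p
    have h1 : (starRingEnd ℂ) (x p) * x p = ((N p : ℝ) : ℂ) := by
      simp only [hN]; rw [mul_comm]; exact Complex.mul_conj (x p)
    push_cast
    rw [mul_add]
    rw [show (starRingEnd ℂ) (x p) * ((c:ℂ) * x p) = (c:ℂ) * ((starRingEnd ℂ) (x p) * x p) by ring, h1]
    ring
  rw [Finset.sum_congr rfl (fun p _ => hterm p)]
  -- split re and im
  have him : ∀ p : Fin n × Fin n,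
      (((c * N p : ℝ) : ℂ) + ((w p : ℝ) : ℂ) * ((starRingEnd ℂ) (x p) * x (p.2, p.1))).im
        = w p * U p := by
    intro p
    simp [Complex.add_im, Complex.ofReal_im, Complex.mul_im, Complex.ofReal_re, hU]
  have hre : ∀ p : Fin n × Fin n,
      (((c * N p : ℝ) : ℂ) + ((w p : ℝ) : ℂ) * ((starRingEnd ℂ) (x p) * x (p.2, p.1))).re
        = c * N p + w p * T p := by
    intro p
    simp [Complex.add_re, Complex.ofReal_re, Complex.mul_re, Complex.ofReal_im, hT]
  rw [Complex.le_def]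
  constructor
  · rw [Complex.re_sum, Complex.zero_re]
    rw [Finset.sum_congr rfl (fun p _ => hre p)]
    have hTsw : ∀ p : Fin n × Fin n, T (p.2, p.1) = T p := by
      intro p
      simp only [hT]
      have h5 : (starRingEnd ℂ) (x (p.2, p.1)) * x ((p.2, p.1).2, (p.2, p.1).1)
          = (starRingEnd ℂ) ((starRingEnd ℂ) (x p) * x (p.2, p.1)) := by
        simp only [map_mul, Complex.conj_conj]
        ring
      rw [h5, Complex.conj_re]
    have pair : ∀ p : Fin n × Fin n, 0 ≤ c * (N p + N (p.2, p.1)) + 2 * (w p * T p) := by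
      intro p
      by_cases hp : p.1 = p.2
      · have hpp : ((p.2, p.1) : Fin n × Fin n) = p := by
          rw [Prod.ext_iff]; exact ⟨hp.symm, hp⟩
        have hTp : T p = N p := by
          simp only [hT, hN, hpp]
          rw [mul_comm, Complex.mul_conj]
          simp
        rw [hpp, hTp]
        have := hNnn p
        have := hwpos p
        nlinarith
      · have hwc : w p ≤ c := hb p.1 p.2 hp
        set A := ‖x p‖ with hA
        set B := ‖x (p.2, p.1)‖ with hB
        have hNA : N p = A ^ 2 := by simp [hN, hA, Complex.sq_norm]
        have hNB : N (p.2, p.1) = B ^ 2 := by simp [hN, hB, Complex.sq_norm]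
        have habs : |T p| ≤ A * B := by
          simp only [hT]
          refine (Complex.abs_re_le_norm _).trans ?_
          rw [norm_mul, Complex.norm_conj]
        have hT1 : -(A * B) ≤ T p := neg_le_of_abs_le habs
        have hApos : 0 ≤ A := norm_nonneg _
        have hBpos : 0 ≤ B := norm_nonneg _
        rw [hNA, hNB]
        nlinarith [sq_nonneg (A - B), hwpos p, mul_nonneg (hwpos p) (mul_nonneg hApos hBpos)]
    have h2 : 0 ≤ ∑ p : Fin n × Fin n, (c * (N p + N (p.2, p.1)) + 2 * (w p * T p)) :=
      Finset.sum_nonneg fun p _ => pair p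
    have h3 : ∑ p : Fin n × Fin n, N (p.2, p.1) = ∑ p : Fin n × Fin n, N p := by
      exact Equiv.sum_comp (Equiv.prodComm (Fin n) (Fin n)) N
    have e1 : ∑ p : Fin n × Fin n, (c * (N p + N (p.2, p.1)) + 2 * (w p * T p))
        = c * ∑ p : Fin n × Fin n, N p + c * ∑ p : Fin n × Fin n, N (p.2, p.1)
          + 2 * ∑ p : Fin n × Fin n, (w p * T p) := by
      rw [Finset.sum_add_distrib]
      simp only [mul_add]
      rw [Finset.sum_add_distrib, ← Finset.mul_sum, ← Finset.mul_sum, ← Finset.mul_sum]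
    have e2 : ∑ p : Fin n × Fin n, (c * N p + w p * T p)
        = c * ∑ p : Fin n × Fin n, N p + ∑ p : Fin n × Fin n, (w p * T p) := by
      rw [Finset.sum_add_distrib, Finset.mul_sum]
    rw [e2]
    rw [e1, h3] at h2
    linarith
  · rw [Complex.im_sum, Complex.zero_im]
    rw [Finset.sum_congr rfl (fun p _ => him p)]
    -- sum is zero by involution
    have key : ∀ p : Fin n × Fin n, w (p.2, p.1) * U (p.2, p.1) = -(w p * U p) := by
      intro p
      rw [hwsw]
      have : U (p.2, p.1) = -U p := by
        simp only [hU]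
        have : (starRingEnd ℂ) (x (p.2, p.1)) * x ((p.2, p.1).2, (p.2, p.1).1)
            = (starRingEnd ℂ) ((starRingEnd ℂ) (x p) * x (p.2, p.1)) := by
          simp only [map_mul, Complex.conj_conj]
          ring
        rw [this, Complex.conj_im]
      rw [this]; ring
    have hsum : ∑ p : Fin n × Fin n, w p * U p
        = ∑ p : Fin n × Fin n, w ((Equiv.prodComm (Fin n) (Fin n)) p) * U ((Equiv.prodComm (Fin n) (Fin n)) p) :=
      (Equiv.sum_comp (Equiv.prodComm (Fin n) (Fin n)) (fun p => w p * U p)).symm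
    have : ∑ p : Fin n × Fin n, w p * U p = -∑ p : Fin n × Fin n, w p * U p := by
      nth_rewrite 1 [hsum]
      rw [← Finset.sum_neg_distrib]
      refine Finset.sum_congr rfl fun p _ => ?_
      simpa [Equiv.prodComm_apply, Prod.swap] using key p
    linarith

/-- For `ρ_λ = (1-λ) 1/n² + λ |ψ_α⟩⟨ψ_α|` with `|ψ_α⟩ = ∑ i, α_i |ii⟩`, `α_i > 0`,
`∑ α_i² = 1` and `0 ≤ λ ≤ 1`: the partial transpose of `ρ_λ` has eigenvalues
`(1-λ)/n² ± λ α_i α_j` (`i ≠ j`) and `(1-λ)/n² + λ α_i²`, and `ρ_λ` is PPT if and only if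
`λ ≤ min_{i≠j} 1/(1 + n² α_i α_j)`. -/
theorem stmt10 (n : ℕ) (hn : 2 ≤ n) (α : Fin n → ℝ) (hα : ∀ i, 0 < α i)
    (hα2 : ∑ i, α i ^ 2 = 1) (lam : ℝ) (hl0 : 0 ≤ lam) (hl1 : lam ≤ 1)
    (ρ : Matrix (Fin n × Fin n) (Fin n × Fin n) ℂ)
    (hρ : ρ = Matrix.of fun p q =>
      (((1 - lam) / (n : ℝ) ^ 2 : ℝ) : ℂ) * (if p = q then 1 else 0) +
      (lam : ℂ) * (if p.1 = p.2 ∧ q.1 = q.2 then ((α p.1 * α q.1 : ℝ) : ℂ) else 0)) :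
    (∀ i j : Fin n, i ≠ j →
        (((1 - lam) / (n : ℝ) ^ 2 + lam * (α i * α j) : ℝ) : ℂ) ∈
            spectrum ℂ (partialTranspose ρ) ∧
        (((1 - lam) / (n : ℝ) ^ 2 - lam * (α i * α j) : ℝ) : ℂ) ∈
            spectrum ℂ (partialTranspose ρ)) ∧
    (∀ i : Fin n,
        (((1 - lam) / (n : ℝ) ^ 2 + lam * α i ^ 2 : ℝ) : ℂ) ∈
            spectrum ℂ (partialTranspose ρ)) ∧
    ((partialTranspose ρ).PosSemidef ↔
        ∀ i j : Fin n, i ≠ j → lam ≤ 1 / (1 + (n : ℝ) ^ 2 * (α i * α j))) := by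
  classical
  set c : ℝ := (1 - lam) / (n : ℝ) ^ 2 with hcdef
  have hn0 : (0:ℝ) < (n:ℝ) ^ 2 := by
    have : (2:ℝ) ≤ (n:ℝ) := by exact_mod_cast hn
    nlinarith
  have hc0 : 0 ≤ c := div_nonneg (by linarith) hn0.le
  -- mulVec formula
  have hM : ∀ (x : Fin n × Fin n → ℂ) (p : Fin n × Fin n), (partialTranspose ρ *ᵥ x) p =
      (c : ℂ) * x p + (lam : ℂ) * (((α p.1 : ℝ) : ℂ) * ((α p.2 : ℝ) : ℂ)) * x (p.2, p.1) := by
    intro x p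
    rw [hρ]
    simp only [partialTranspose, Matrix.mulVec, dotProduct, Matrix.of_apply, add_mul,
      Finset.sum_add_distrib]
    congr 1
    · rw [Finset.sum_eq_single p]
      · simp
      · intro q _ hq
        have : ¬ ((p.1, q.2) = (q.1, p.2)) := by
          simp only [Prod.mk.injEq, not_and]
          intro h1 h2
          exact hq (Prod.ext h1.symm h2)
        simp [this]
      · simp
    · rw [Finset.sum_eq_single ((p.2, p.1) : Fin n × Fin n)]
      · simp [mul_comm, mul_assoc]
      · intro q _ hq
        have : ¬ (p.1 = q.2 ∧ q.1 = p.2) := by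
          rintro ⟨h1, h2⟩
          exact hq (Prod.ext h2 h1.symm)
        simp [this]
      · simp
  -- Hermitian
  have hherm : (partialTranspose ρ).IsHermitian := by
    rw [hρ]
    ext p q
    simp only [Matrix.conjTranspose_apply, partialTranspose, Matrix.of_apply, star_add, star_mul',
      Complex.star_def, Complex.conj_ofReal, apply_ite (starRingEnd ℂ), map_one, map_zero]
    have hc1 : ((q.1, p.2) = (p.1, q.2)) ↔ ((p.1, q.2) = (q.1, p.2)) := eq_comm
    have hc2 : (q.1 = p.2 ∧ p.1 = q.2) ↔ (p.1 = q.2 ∧ q.1 = p.2) := and_comm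
    rw [if_congr hc1 rfl rfl, if_congr hc2 (by rw [mul_comm]) rfl]
  have haC : ∀ i : Fin n, ((α i : ℝ) : ℂ) = (fun k => ((α k : ℝ) : ℂ)) i := fun _ => rfl
  -- spectrum membership, off-diagonal
  have hspec_off : ∀ (i j : Fin n), i ≠ j → ∀ s : ℂ, s * s = 1 →
      ((c : ℂ) + s * (lam : ℂ) * (((α i : ℝ) : ℂ) * ((α j : ℝ) : ℂ))) ∈
        spectrum ℂ (partialTranspose ρ) := by
    intro i j hij s hs
    have hne1 : ((i,j) : Fin n × Fin n) ≠ (j,i) := by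
      simp only [ne_eq, Prod.mk.injEq, not_and]
      intro h; exact absurd h hij
    refine spec_mem _ _
      (fun q => (if q = (i,j) then 1 else 0) + s * (if q = (j,i) then 1 else 0)) ?_ ?_
    · intro h0
      have := congrFun h0 (i, j)
      simp [hne1] at this
    · exact eigen_offdiag n (fun k => ((α k : ℝ) : ℂ)) (c : ℂ) (lam : ℂ)
        (partialTranspose ρ) hM i j hij s hs
  have hspec_diag : ∀ i : Fin n,
      ((c : ℂ) + (lam : ℂ) * (((α i : ℝ) : ℂ) * ((α i : ℝ) : ℂ))) ∈
        spectrum ℂ (partialTranspose ρ) := by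
    intro i
    refine spec_mem _ _ (fun q => if q = (i,i) then 1 else 0) ?_ ?_
    · intro h0
      have := congrFun h0 (i, i)
      simp at this
    · exact eigen_diag n (fun k => ((α k : ℝ) : ℂ)) (c : ℂ) (lam : ℂ)
        (partialTranspose ρ) hM i
  refine ⟨?_, ?_, ?_⟩
  · intro i j hij
    constructor
    · have := hspec_off i j hij 1 (by norm_num)
      have he : ((c + lam * (α i * α j) : ℝ) : ℂ)
          = (c : ℂ) + 1 * (lam : ℂ) * (((α i : ℝ) : ℂ) * ((α j : ℝ) : ℂ)) := by
        push_cast; ring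
      rw [he]; exact this
    · have := hspec_off i j hij (-1) (by norm_num)
      have he : ((c - lam * (α i * α j) : ℝ) : ℂ)
          = (c : ℂ) + (-1) * (lam : ℂ) * (((α i : ℝ) : ℂ) * ((α j : ℝ) : ℂ)) := by
        push_cast; ring
      rw [he]; exact this
  · intro i
    have := hspec_diag i
    have he : ((c + lam * α i ^ 2 : ℝ) : ℂ)
        = (c : ℂ) + (lam : ℂ) * (((α i : ℝ) : ℂ) * ((α i : ℝ) : ℂ)) := by
      push_cast; ring
    rw [he]; exact this
  · constructor
    · -- PosSemidef → bound
      intro hPS i j hij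
      have hne1 : ((i,j) : Fin n × Fin n) ≠ (j,i) := by
        simp only [ne_eq, Prod.mk.injEq, not_and]
        intro h; exact absurd h hij
      set v : Fin n × Fin n → ℂ :=
        fun q => (if q = (i,j) then 1 else 0) + (-1) * (if q = (j,i) then 1 else 0) with hv
      have hq := (Matrix.posSemidef_iff_dotProduct_mulVec.mp hPS).2 v
      have heig := eigen_offdiag n (fun k => ((α k : ℝ) : ℂ)) (c : ℂ) (lam : ℂ)
        (partialTranspose ρ) hM i j hij (-1) (by norm_num)
      rw [hv] at hq
      rw [heig] at hq
      have hvv : dotProduct (star v) ((((c:ℂ) + (-1) * (lam:ℂ) *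
          (((α i:ℝ):ℂ) * ((α j:ℝ):ℂ)))) • v) = ((c:ℂ) + (-1) * (lam:ℂ) *
          (((α i:ℝ):ℂ) * ((α j:ℝ):ℂ))) * 2 := by
        rw [dotProduct_smul, smul_eq_mul]
        congr 1
        simp only [dotProduct, Pi.star_apply]
        have hterm : ∀ q : Fin n × Fin n, star (v q) * v q =
            (if q = ((i,j) : Fin n × Fin n) then 1 else 0) +
            (if q = ((j,i) : Fin n × Fin n) then 1 else 0) := by
          intro q
          by_cases h1 : q = (i,j)
          · subst h1
            simp [hv, hne1]
          · by_cases h2 : q = (j,i)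
            · subst h2
              simp [hv, hne1.symm]
            · simp [h1, h2, hv]
        rw [Finset.sum_congr rfl fun q _ => hterm q, Finset.sum_add_distrib]
        rw [Finset.sum_ite_eq' Finset.univ ((i,j) : Fin n × Fin n) (fun _ => (1:ℂ)),
          Finset.sum_ite_eq' Finset.univ ((j,i) : Fin n × Fin n) (fun _ => (1:ℂ))]
        simp
        norm_num
      rw [hvv] at hq
      have he : ((c:ℂ) + (-1) * (lam:ℂ) * (((α i:ℝ):ℂ) * ((α j:ℝ):ℂ))) * 2
          = (((c - lam * (α i * α j)) * 2 : ℝ) : ℂ) := by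
        push_cast; ring
      rw [he] at hq
      have hre : (0:ℝ) ≤ (c - lam * (α i * α j)) * 2 := by
        have := (Complex.le_def.mp hq).1
        simpa using this
      have hX : (0:ℝ) < 1 + (n:ℝ) ^ 2 * (α i * α j) := by
        have h1 : 0 ≤ (n:ℝ) ^ 2 * (α i * α j) :=
          mul_nonneg hn0.le (mul_nonneg (hα i).le (hα j).le)
        linarith
      rw [le_div_iff₀ hX]
      have hc' : lam * (α i * α j) ≤ c := by linarith
      rw [hcdef] at hc'
      rw [le_div_iff₀ hn0] at hc'
      nlinarith
    · -- bound → PosSemidef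
      intro hcond
      refine Matrix.posSemidef_iff_dotProduct_mulVec.mpr ⟨hherm, ?_⟩
      intro x
      have hbnd : ∀ i j : Fin n, i ≠ j → lam * (α i * α j) ≤ c := by
        intro i j hij
        have hX : (0:ℝ) < 1 + (n:ℝ) ^ 2 * (α i * α j) := by
          have h1 : 0 ≤ (n:ℝ) ^ 2 * (α i * α j) :=
            mul_nonneg hn0.le (mul_nonneg (hα i).le (hα j).le)
          linarith
        have h1 := hcond i j hij
        rw [le_div_iff₀ hX] at h1
        rw [hcdef, le_div_iff₀ hn0]
        nlinarith
      have hform : dotProduct (star x) (partialTranspose ρ *ᵥ x)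
          = ∑ p : Fin n × Fin n, (starRingEnd ℂ) (x p) *
            ((c:ℂ) * x p + ((lam * (α p.1 * α p.2) : ℝ) : ℂ) * x (p.2, p.1)) := by
        simp only [dotProduct, Pi.star_apply, Complex.star_def]
        refine Finset.sum_congr rfl fun p _ => ?_
        rw [hM]
        push_cast
        ring
      rw [hform]
      exact quad_nonneg n α hα c lam hc0 hl0 hbnd x
end

section
/- If F_x ∈ M_n(ℂ) are positive semidefinite, then for any unitary matrices U_x ∈ M_m(ℂ), the operator norm of Σ_x U_x ⊗ F_x in M_m ⊗ M_n satisfies ‖Σ_x U_x ⊗ F_x‖ ≤ ‖Σ_x F_x‖. -/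
open scoped Matrix Kronecker BigOperators
open ComplexOrder
open scoped Matrix.Norms.L2Operator MatrixOrder

lemma auxKronCT {l p q r : Type*} (A : Matrix l p ℂ) (B : Matrix q r ℂ) :
    (A ⊗ₖ B)ᴴ = Aᴴ ⊗ₖ Bᴴ := by
  ext ⟨i, j⟩ ⟨k, l⟩
  simp [Matrix.conjTranspose_apply, Matrix.kroneckerMap_apply, star_mul']

lemma auxOneKronNorm (m : ℕ) {n : ℕ} (S : Matrix (Fin n) (Fin n) ℂ) :
    ‖(1 : Matrix (Fin m) (Fin m) ℂ) ⊗ₖ S‖ ≤ ‖S‖ := by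
  rw [Matrix.l2_opNorm_def]
  refine ContinuousLinearMap.opNorm_le_bound _ (norm_nonneg _) fun x => ?_
  set T := (1 : Matrix (Fin m) (Fin m) ℂ) ⊗ₖ S with hT
  have happ : ((Matrix.toEuclideanLin.trans LinearMap.toContinuousLinearMap) T) x
      = (WithLp.equiv 2 ((Fin m × Fin n) → ℂ)).symm (T *ᵥ (WithLp.equiv 2 _ x)) := rfl
  rw [happ]
  set u : (Fin m × Fin n) → ℂ := WithLp.equiv 2 _ x with hu
  set xi : Fin m → EuclideanSpace ℂ (Fin n) :=
    fun i => (WithLp.equiv 2 (Fin n → ℂ)).symm (fun j => u (i, j)) with hxi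
  have hTv : ∀ p : Fin m × Fin n, (T *ᵥ u) p = (S *ᵥ fun l => u (p.1, l)) p.2 := by
    rintro ⟨i, j⟩
    simp [hT, Matrix.mulVec, dotProduct, Fintype.sum_prod_type, Matrix.one_apply,
      ite_mul, Matrix.kroneckerMap_apply]
  have hxn : ‖x‖ ^ 2 = ∑ i : Fin m, ‖xi i‖ ^ 2 := by
    rw [EuclideanSpace.norm_eq, Real.sq_sqrt (by positivity), Fintype.sum_prod_type]
    refine Finset.sum_congr rfl fun i _ => ?_
    rw [EuclideanSpace.norm_eq, Real.sq_sqrt (by positivity)]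
    rfl
  have key : ∑ p : Fin m × Fin n, ‖(T *ᵥ u) p‖ ^ 2 ≤ (‖S‖ * ‖x‖) ^ 2 := by
    calc ∑ p : Fin m × Fin n, ‖(T *ᵥ u) p‖ ^ 2
        = ∑ i : Fin m, ∑ j : Fin n, ‖(S *ᵥ fun l => u (i, l)) j‖ ^ 2 := by
          rw [Fintype.sum_prod_type]
          exact Finset.sum_congr rfl fun i _ => Finset.sum_congr rfl fun j _ => by rw [hTv (i, j)]
      _ = ∑ i : Fin m, ‖(WithLp.equiv 2 (Fin n → ℂ)).symm (S *ᵥ fun l => u (i, l))‖ ^ 2 := by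
          refine Finset.sum_congr rfl fun i _ => ?_
          rw [EuclideanSpace.norm_eq, Real.sq_sqrt (by positivity)]
          rfl
      _ ≤ ∑ i : Fin m, (‖S‖ * ‖xi i‖) ^ 2 := by
          refine Finset.sum_le_sum fun i _ => ?_
          exact pow_le_pow_left₀ (norm_nonneg _) (Matrix.l2_opNorm_mulVec S (xi i)) 2
      _ = (‖S‖ * ‖x‖) ^ 2 := by
          simp_rw [mul_pow, ← Finset.mul_sum, ← hxn]
  calc ‖(WithLp.equiv 2 ((Fin m × Fin n) → ℂ)).symm (T *ᵥ u)‖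
      = Real.sqrt (∑ p : Fin m × Fin n, ‖(T *ᵥ u) p‖ ^ 2) := by
        rw [EuclideanSpace.norm_eq]; rfl
    _ ≤ Real.sqrt ((‖S‖ * ‖x‖) ^ 2) := Real.sqrt_le_sqrt key
    _ = ‖S‖ * ‖x‖ := Real.sqrt_sq (by positivity)

lemma keyMain {n m N : ℕ} (F : Fin N → Matrix (Fin n) (Fin n) ℂ)
    (hF : ∀ x, (F x).PosSemidef)
    (U : Fin N → Matrix (Fin m) (Fin m) ℂ)
    (hU : ∀ x, U x ∈ Matrix.unitaryGroup (Fin m) ℂ) :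
    ‖∑ x, U x ⊗ₖ F x‖ ≤ ‖∑ x, F x‖ := by
  classical
  set b : Fin N → Matrix (Fin n) (Fin n) ℂ := fun x => CFC.sqrt (F x) with hbdef
  have hbH : ∀ x, (b x)ᴴ = b x := fun x => (Matrix.nonneg_iff_posSemidef.mp (CFC.sqrt_nonneg (F x))).1
  have hbb : ∀ x, b x * b x = F x := fun x => CFC.sqrt_mul_sqrt_self (F x) (hF x).nonneg
  set S := ∑ x, F x with hS
  set R : Matrix (Fin m × Fin n) (Fin N × (Fin m × Fin n)) ℂ :=
    Matrix.of fun p q => (U q.1 ⊗ₖ b q.1) p q.2 with hR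
  set C : Matrix (Fin N × (Fin m × Fin n)) (Fin m × Fin n) ℂ :=
    Matrix.of fun q p => ((1 : Matrix (Fin m) (Fin m) ℂ) ⊗ₖ b q.1) q.2 p with hC
  have hRC : R * C = ∑ x, U x ⊗ₖ F x := by
    ext p p'
    rw [Matrix.mul_apply, Fintype.sum_prod_type, Matrix.sum_apply]
    refine Finset.sum_congr rfl fun x _ => ?_
    have : (U x ⊗ₖ b x) * ((1 : Matrix (Fin m) (Fin m) ℂ) ⊗ₖ b x) = U x ⊗ₖ F x := by
      rw [← Matrix.mul_kronecker_mul, Matrix.mul_one, hbb]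
    rw [← this, Matrix.mul_apply]
    rfl
  have hRR : R * Rᴴ = (1 : Matrix (Fin m) (Fin m) ℂ) ⊗ₖ S := by
    have hterm : ∀ x, (U x ⊗ₖ b x) * (U x ⊗ₖ b x)ᴴ
        = (1 : Matrix (Fin m) (Fin m) ℂ) ⊗ₖ F x := by
      intro x
      rw [auxKronCT, ← Matrix.mul_kronecker_mul, hbH, hbb, ← Matrix.star_eq_conjTranspose,
        Unitary.mul_star_self_of_mem (hU x)]
    ext p p'
    rw [Matrix.mul_apply, Fintype.sum_prod_type]
    have hsum : ((1 : Matrix (Fin m) (Fin m) ℂ) ⊗ₖ S) p p'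
        = ∑ x, ((1 : Matrix (Fin m) (Fin m) ℂ) ⊗ₖ F x) p p' := by
      simp [hS, Matrix.kroneckerMap_apply, Matrix.sum_apply, Finset.mul_sum]
    rw [hsum]
    refine Finset.sum_congr rfl fun x _ => ?_
    rw [← hterm x, Matrix.mul_apply]
    rfl
  have hCC : Cᴴ * C = (1 : Matrix (Fin m) (Fin m) ℂ) ⊗ₖ S := by
    have hterm : ∀ x, ((1 : Matrix (Fin m) (Fin m) ℂ) ⊗ₖ b x)ᴴ *
        ((1 : Matrix (Fin m) (Fin m) ℂ) ⊗ₖ b x)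
        = (1 : Matrix (Fin m) (Fin m) ℂ) ⊗ₖ F x := by
      intro x
      rw [auxKronCT, ← Matrix.mul_kronecker_mul, hbH, hbb, Matrix.conjTranspose_one,
        Matrix.one_mul]
    ext p p'
    rw [Matrix.mul_apply, Fintype.sum_prod_type]
    have hsum : ((1 : Matrix (Fin m) (Fin m) ℂ) ⊗ₖ S) p p'
        = ∑ x, ((1 : Matrix (Fin m) (Fin m) ℂ) ⊗ₖ F x) p p' := by
      simp [hS, Matrix.kroneckerMap_apply, Matrix.sum_apply, Finset.mul_sum]
    rw [hsum]
    refine Finset.sum_congr rfl fun x _ => ?_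
    rw [← hterm x, Matrix.mul_apply]
    rfl
  have hKle : ‖(1 : Matrix (Fin m) (Fin m) ℂ) ⊗ₖ S‖ ≤ ‖S‖ := auxOneKronNorm m S
  have hRnorm : ‖R‖ * ‖R‖ = ‖(1 : Matrix (Fin m) (Fin m) ℂ) ⊗ₖ S‖ := by
    have := Matrix.l2_opNorm_conjTranspose_mul_self Rᴴ
    rw [Matrix.conjTranspose_conjTranspose, hRR, Matrix.l2_opNorm_conjTranspose] at this
    exact this.symm
  have hCnorm : ‖C‖ * ‖C‖ = ‖(1 : Matrix (Fin m) (Fin m) ℂ) ⊗ₖ S‖ := by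
    have := Matrix.l2_opNorm_conjTranspose_mul_self C
    rw [hCC] at this
    exact this.symm
  have hmul : ‖∑ x, U x ⊗ₖ F x‖ ≤ ‖R‖ * ‖C‖ := hRC ▸ Matrix.l2_opNorm_mul R C
  nlinarith [norm_nonneg R, norm_nonneg C, sq_nonneg (‖R‖ - ‖C‖)]

/-- If `F_x ∈ M_n(ℂ)` are positive semidefinite, then for any unitaries `U_x ∈ M_m(ℂ)`,
`‖∑ x, U_x ⊗ F_x‖ ≤ ‖∑ x, F_x‖`. -/
theorem stmt15 (n m N : ℕ) (F : Fin N → Matrix (Fin n) (Fin n) ℂ)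
    (hF : ∀ x, (F x).PosSemidef)
    (U : Fin N → Matrix (Fin m) (Fin m) ℂ)
    (hU : ∀ x, U x ∈ Matrix.unitaryGroup (Fin m) ℂ) :
    opNorm (∑ x, U x ⊗ₖ F x) ≤ opNorm (∑ x, F x) := by
  exact keyMain F hF U hU
end

section
/- For any matrices b_x, c_x ∈ M_n(ℂ), x = 1,...,N, and unitaries U_x ∈ M_m(ℂ), ‖Σ_x U_x ⊗ b_x c_x‖_{M_m ⊗ M_n} ≤ ‖Σ_x b_x b_x*‖^{1/2} · ‖Σ_x c_x* c_x‖^{1/2}. -/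
open scoped Matrix Kronecker BigOperators

section aux

set_option maxHeartbeats 1000000

open ContinuousLinearMap in
/-- Cauchy–Schwarz / Haagerup estimate for continuous linear maps on a Hilbert space. -/
lemma clm_cauchy_schwarz {H : Type*} [NormedAddCommGroup H] [InnerProductSpace ℂ H]
    [CompleteSpace H] {N : ℕ} (T S : Fin N → (H →L[ℂ] H)) :
    ‖∑ x, T x * S x‖ ≤
      Real.sqrt ‖∑ x, T x * star (T x)‖ * Real.sqrt ‖∑ x, star (S x) * S x‖ := by
  set α := ‖∑ x, T x * star (T x)‖ with hα
  set β := ‖∑ x, star (S x) * S x‖ with hβ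
  have hα0 : (0:ℝ) ≤ α := norm_nonneg _
  have hβ0 : (0:ℝ) ≤ β := norm_nonneg _
  set A := ∑ x, T x * S x with hA
  refine opNorm_le_bound _ (by positivity) fun v => ?_
  set w := A v with hw
  -- sum of ‖S x v‖²
  have hS : ∑ x, ‖S x v‖ ^ 2 ≤ β * ‖v‖ ^ 2 := by
    have h1 : (∑ x, ‖S x v‖ ^ 2 : ℝ)
        = RCLike.re (inner ℂ ((∑ x, star (S x) * S x) v) v : ℂ) := by
      rw [ContinuousLinearMap.sum_apply, sum_inner, map_sum]
      refine Finset.sum_congr rfl fun x _ => ?_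
      rw [ContinuousLinearMap.mul_apply, ContinuousLinearMap.star_eq_adjoint,
        ContinuousLinearMap.adjoint_inner_left]
      exact (inner_self_eq_norm_sq _).symm
    rw [h1]
    calc RCLike.re (inner ℂ ((∑ x, star (S x) * S x) v) v : ℂ)
        ≤ ‖(inner ℂ ((∑ x, star (S x) * S x) v) v : ℂ)‖ := RCLike.re_le_norm _
      _ ≤ ‖(∑ x, star (S x) * S x) v‖ * ‖v‖ := norm_inner_le_norm _ _
      _ ≤ (β * ‖v‖) * ‖v‖ :=
          mul_le_mul_of_nonneg_right (le_opNorm _ _) (norm_nonneg _)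
      _ = β * ‖v‖ ^ 2 := by ring
  -- sum of ‖(star (T x)) w‖²
  have hT : ∑ x, ‖(star (T x)) w‖ ^ 2 ≤ α * ‖w‖ ^ 2 := by
    have h1 : (∑ x, ‖(star (T x)) w‖ ^ 2 : ℝ)
        = RCLike.re (inner ℂ ((∑ x, T x * star (T x)) w) w : ℂ) := by
      rw [ContinuousLinearMap.sum_apply, sum_inner, map_sum]
      refine Finset.sum_congr rfl fun x _ => ?_
      rw [ContinuousLinearMap.mul_apply, ContinuousLinearMap.star_eq_adjoint]
      rw [← ContinuousLinearMap.adjoint_inner_right (T x)]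
      exact (inner_self_eq_norm_sq _).symm
    rw [h1]
    calc RCLike.re (inner ℂ ((∑ x, T x * star (T x)) w) w : ℂ)
        ≤ ‖(inner ℂ ((∑ x, T x * star (T x)) w) w : ℂ)‖ := RCLike.re_le_norm _
      _ ≤ ‖(∑ x, T x * star (T x)) w‖ * ‖w‖ := norm_inner_le_norm _ _
      _ ≤ (α * ‖w‖) * ‖w‖ :=
          mul_le_mul_of_nonneg_right (le_opNorm _ _) (norm_nonneg _)
      _ = α * ‖w‖ ^ 2 := by ring
  -- main estimate on ‖w‖²
  have hmain : ‖w‖ ^ 2 ≤ (Real.sqrt β * ‖v‖) * (Real.sqrt α * ‖w‖) := by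
    have h1 : (‖w‖ ^ 2 : ℝ) = RCLike.re (inner ℂ w w : ℂ) := (inner_self_eq_norm_sq _).symm
    have h2 : (inner ℂ w w : ℂ) = ∑ x, inner ℂ (S x v) ((star (T x)) w) := by
      nth_rewrite 1 [hw]
      rw [hA, ContinuousLinearMap.sum_apply, sum_inner]
      refine Finset.sum_congr rfl fun x _ => ?_
      rw [ContinuousLinearMap.mul_apply, ContinuousLinearMap.star_eq_adjoint,
        ContinuousLinearMap.adjoint_inner_right]
    calc ‖w‖ ^ 2 = RCLike.re (∑ x, (inner ℂ (S x v) ((star (T x)) w) : ℂ)) := by rw [h1, h2]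
      _ = ∑ x, RCLike.re (inner ℂ (S x v) ((star (T x)) w) : ℂ) := map_sum _ _ _
      _ ≤ ∑ x, ‖S x v‖ * ‖(star (T x)) w‖ := by
          refine Finset.sum_le_sum fun x _ => ?_
          exact (RCLike.re_le_norm _).trans (norm_inner_le_norm _ _)
      _ ≤ Real.sqrt (∑ x, ‖S x v‖ ^ 2) * Real.sqrt (∑ x, ‖(star (T x)) w‖ ^ 2) :=
          Real.sum_mul_le_sqrt_mul_sqrt _ _ _
      _ ≤ Real.sqrt (β * ‖v‖ ^ 2) * Real.sqrt (α * ‖w‖ ^ 2) := by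
          gcongr
      _ = (Real.sqrt β * ‖v‖) * (Real.sqrt α * ‖w‖) := by
          rw [Real.sqrt_mul hβ0, Real.sqrt_mul hα0, Real.sqrt_sq (norm_nonneg _),
            Real.sqrt_sq (norm_nonneg _)]
  rcases eq_or_lt_of_le (norm_nonneg w) with h0 | h0
  · rw [← h0]; positivity
  · have h3 : ‖w‖ * ‖w‖ ≤ (Real.sqrt α * Real.sqrt β * ‖v‖) * ‖w‖ :=
      calc ‖w‖ * ‖w‖ = ‖w‖ ^ 2 := (sq _).symm
        _ ≤ (Real.sqrt β * ‖v‖) * (Real.sqrt α * ‖w‖) := hmain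
        _ = (Real.sqrt α * Real.sqrt β * ‖v‖) * ‖w‖ := by ring
    exact le_of_mul_le_mul_right h3 h0

/-- The operator norm of `1 ⊗ₖ D` is at most that of `D`. -/
lemma opNorm_one_kronecker_le {m n : ℕ} (D : Matrix (Fin n) (Fin n) ℂ) :
    opNorm ((1 : Matrix (Fin m) (Fin m) ℂ) ⊗ₖ D) ≤ opNorm D := by
  refine ContinuousLinearMap.opNorm_le_bound _ (norm_nonneg _) fun v => ?_
  set f := Matrix.toEuclideanCLM (𝕜 := ℂ) (n := Fin n)
  set vi : Fin m → EuclideanSpace ℂ (Fin n) := fun i => WithLp.toLp 2 (fun j => v (i, j)) with hvi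
  have key : ∀ i j, (Matrix.toEuclideanCLM (𝕜 := ℂ)
      ((1 : Matrix (Fin m) (Fin m) ℂ) ⊗ₖ D) v) (i, j) = (f D (vi i)) j := by
    intro i j
    rw [Matrix.ofLp_toEuclideanCLM, show f D (vi i) = Matrix.toEuclideanCLM (𝕜 := ℂ) D (vi i) from rfl,
      Matrix.ofLp_toEuclideanCLM]
    show ((1 : Matrix (Fin m) (Fin m) ℂ) ⊗ₖ D).mulVec (fun p => v p) (i, j)
      = D.mulVec (fun k => v (i, k)) j
    simp [Matrix.mulVec, dotProduct, Fintype.sum_prod_type,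
      Matrix.kroneckerMap_apply, Matrix.one_apply, ite_mul, Finset.sum_ite_eq]
  have hnsq : ∀ {ι : Type} [Fintype ι] (x : EuclideanSpace ℂ ι),
      ‖x‖ ^ 2 = ∑ i, ‖x i‖ ^ 2 := by
    intro ι _ x
    rw [EuclideanSpace.norm_eq, Real.sq_sqrt (by positivity)]
  have hsq : ‖Matrix.toEuclideanCLM (𝕜 := ℂ)
      ((1 : Matrix (Fin m) (Fin m) ℂ) ⊗ₖ D) v‖ ^ 2 ≤ (‖f D‖ * ‖v‖) ^ 2 := by
    rw [hnsq]
    calc ∑ p : Fin m × Fin n, ‖(Matrix.toEuclideanCLM (𝕜 := ℂ)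
          ((1 : Matrix (Fin m) (Fin m) ℂ) ⊗ₖ D) v) p‖ ^ 2
        = ∑ i, ∑ j, ‖(f D (vi i)) j‖ ^ 2 := by
          rw [Fintype.sum_prod_type]
          exact Finset.sum_congr rfl fun i _ => Finset.sum_congr rfl fun j _ => by rw [key]
      _ = ∑ i, ‖f D (vi i)‖ ^ 2 :=
          Finset.sum_congr rfl fun i _ => (hnsq _).symm
      _ ≤ ∑ i, (‖f D‖ * ‖vi i‖) ^ 2 := by
          refine Finset.sum_le_sum fun i _ => ?_
          exact pow_le_pow_left₀ (norm_nonneg _) (ContinuousLinearMap.le_opNorm _ _) 2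
      _ = ‖f D‖ ^ 2 * ∑ i, ‖vi i‖ ^ 2 := by
          rw [Finset.mul_sum]; exact Finset.sum_congr rfl fun i _ => by ring
      _ = (‖f D‖ * ‖v‖) ^ 2 := by
          rw [mul_pow]
          congr 1
          rw [hnsq v, Fintype.sum_prod_type]
          exact Finset.sum_congr rfl fun i _ => hnsq (vi i)
  have h := Real.sqrt_le_sqrt hsq
  rwa [Real.sqrt_sq (norm_nonneg _), Real.sqrt_sq (by positivity)] at h

lemma kron_conjTranspose {l m : Type*} [Fintype l] [DecidableEq l] [Fintype m] [DecidableEq m]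
    (A : Matrix l l ℂ) (B : Matrix m m ℂ) : (A ⊗ₖ B)ᴴ = Aᴴ ⊗ₖ Bᴴ := by
  ext ⟨i, j⟩ ⟨k, l⟩
  simp [Matrix.conjTranspose_apply, Matrix.kroneckerMap_apply, mul_comm]

lemma one_kron_sum {m n N : ℕ} (M : Fin N → Matrix (Fin n) (Fin n) ℂ) :
    (1 : Matrix (Fin m) (Fin m) ℂ) ⊗ₖ (∑ x, M x) = ∑ x, (1 : Matrix (Fin m) (Fin m) ℂ) ⊗ₖ M x := by
  ext ⟨i, j⟩ ⟨k, l⟩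
  simp [Matrix.kroneckerMap_apply, Finset.mul_sum, Matrix.sum_apply]

end aux

set_option maxHeartbeats 1000000 in
/-- For any matrices `b_x, c_x ∈ M_n(ℂ)` and unitaries `U_x ∈ M_m(ℂ)`,
`‖∑ x, U_x ⊗ (b_x c_x)‖ ≤ ‖∑ x, b_x b_x*‖^(1/2) · ‖∑ x, c_x* c_x‖^(1/2)`. -/
theorem stmt16 (n m N : ℕ) (b c : Fin N → Matrix (Fin n) (Fin n) ℂ)
    (U : Fin N → Matrix (Fin m) (Fin m) ℂ)
    (hU : ∀ x, U x ∈ Matrix.unitaryGroup (Fin m) ℂ) :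
    opNorm (∑ x, U x ⊗ₖ (b x * c x)) ≤
      Real.sqrt (opNorm (∑ x, b x * (b x)ᴴ)) * Real.sqrt (opNorm (∑ x, (c x)ᴴ * c x)) := by
  set f := Matrix.toEuclideanCLM (𝕜 := ℂ) (n := Fin m × Fin n) with hf
  set T : Fin N → _ := fun x => f ((U x) ⊗ₖ (b x)) with hTdef
  set S : Fin N → _ := fun x => f ((1 : Matrix (Fin m) (Fin m) ℂ) ⊗ₖ (c x)) with hSdef
  have hTS : f (∑ x, U x ⊗ₖ (b x * c x)) = ∑ x, T x * S x := by
    rw [map_sum]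
    refine Finset.sum_congr rfl fun x _ => ?_
    rw [hTdef, hSdef, ← map_mul, ← Matrix.mul_kronecker_mul, mul_one]
  have hT : ∑ x, T x * star (T x)
      = f ((1 : Matrix (Fin m) (Fin m) ℂ) ⊗ₖ (∑ x, b x * (b x)ᴴ)) := by
    rw [one_kron_sum, map_sum]
    refine Finset.sum_congr rfl fun x _ => ?_
    rw [hTdef, ← map_star, ← map_mul]
    congr 1
    rw [Matrix.star_eq_conjTranspose, kron_conjTranspose, ← Matrix.mul_kronecker_mul]
    have := (Matrix.mem_unitaryGroup_iff.mp (hU x))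
    rw [Matrix.star_eq_conjTranspose] at this
    rw [this]
  have hS : ∑ x, star (S x) * S x
      = f ((1 : Matrix (Fin m) (Fin m) ℂ) ⊗ₖ (∑ x, (c x)ᴴ * c x)) := by
    rw [one_kron_sum, map_sum]
    refine Finset.sum_congr rfl fun x _ => ?_
    rw [hSdef, ← map_star, ← map_mul]
    congr 1
    rw [Matrix.star_eq_conjTranspose, kron_conjTranspose, Matrix.conjTranspose_one,
      ← Matrix.mul_kronecker_mul, one_mul]
  calc opNorm (∑ x, U x ⊗ₖ (b x * c x)) = ‖∑ x, T x * S x‖ := by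
        rw [opNorm, ← hf, hTS]
    _ ≤ Real.sqrt ‖∑ x, T x * star (T x)‖ * Real.sqrt ‖∑ x, star (S x) * S x‖ :=
        clm_cauchy_schwarz T S
    _ = Real.sqrt (opNorm ((1 : Matrix (Fin m) (Fin m) ℂ) ⊗ₖ (∑ x, b x * (b x)ᴴ)))
        * Real.sqrt (opNorm ((1 : Matrix (Fin m) (Fin m) ℂ) ⊗ₖ (∑ x, (c x)ᴴ * c x))) := by
        rw [hT, hS]; rfl
    _ ≤ Real.sqrt (opNorm (∑ x, b x * (b x)ᴴ)) * Real.sqrt (opNorm (∑ x, (c x)ᴴ * c x)) := by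
        gcongr
        · exact opNorm_one_kronecker_le _
        · exact opNorm_one_kronecker_le _
end
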